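/- For every k ≥ 2, every vertex of V(G_{k-1}) (i.e., every vertex belonging to a generation U_j with j ≤ k-1) has a neighbor in the k-th generation U_k in the Apollonian network G_k. -/

import Mathlib

/-- A family of Apollonian networks, given by a vertex set `Vert` together with a
generation labeling `gen` and an adjacency relation `adj`, satisfying the recursive
construction: the first generation `U₁` consists of three pairwise adjacent vertices
(forming `G₁`); and for each `k ≥ 1`, for each vertex `u` of generation `k` and each
adjacent pair `{x, y}` of neighbors of `u` in `G_k`, exactly one new vertex of
generation `k + 1` is created, adjacent to exactly `u`, `x`, and `y`.
The `k`-th Apollonian network `G_k` is the induced subgraph on the vertices of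
generation at most `k`. -/
structure ApollonianNetwork where
  Vert : Type
  adj : Vert → Vert → Prop
  adj_symm : ∀ a b, adj a b → adj b a
  adj_irrefl : ∀ a, ¬ adj a a
  gen : Vert → ℕ
  gen_pos : ∀ v, 1 ≤ gen v
  /-- The first generation consists of exactly three vertices. -/
  U1_card : ∃ a b c : Vert, a ≠ b ∧ a ≠ c ∧ b ≠ c ∧ {v | gen v = 1} = {a, b, c}
  /-- `G₁` is a complete graph on the first generation. -/
  U1_complete : ∀ a b, gen a = 1 → gen b = 1 → a ≠ b → adj a b
  /-- All edges join vertices of distinct generations, except within generation 1. -/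
  adj_gen : ∀ a b, adj a b → gen a = gen b → gen a = 1
  /-- Every vertex `v` of generation `k ≥ 2` is adjacent, among the vertices of earlier
  generations, to exactly three vertices `u`, `x`, `y`, where `u` has generation `k - 1`
  and `x`, `y` are neighbors of `u` in `G_{k-1}` that are adjacent to each other. -/
  created : ∀ v, 2 ≤ gen v → ∃ u x y,
    gen u = gen v - 1 ∧ gen x ≤ gen v - 1 ∧ gen y ≤ gen v - 1 ∧
    adj u x ∧ adj u y ∧ adj x y ∧
    {w | adj v w ∧ gen w < gen v} = {u, x, y}
  /-- For each `k ≥ 1`, each vertex `u` of generation `k`, and each adjacent pair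
  `{x, y}` of neighbors of `u` in `G_k`, there is exactly one vertex of generation
  `k + 1` whose neighbors in `G_{k+1}` are exactly `u`, `x`, and `y`. -/
  attach : ∀ k, 1 ≤ k → ∀ u x y,
    gen u = k → gen x ≤ k → gen y ≤ k → x ≠ y →
    adj u x → adj u y → adj x y →
    ∃! v, gen v = k + 1 ∧ {w | adj v w ∧ gen w ≤ k} = ({u, x, y} : Set Vert)

/-- The `k`-th Apollonian network `G_k`: the induced subgraph on the vertices of
generation at most `k`. -/
def ApollonianNetwork.G (A : ApollonianNetwork) (k : ℕ) :
    SimpleGraph {v : A.Vert // A.gen v ≤ k} where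
  Adj a b := A.adj a b
  symm := ⟨fun a b h => A.adj_symm a b h⟩
  loopless := ⟨fun a h => A.adj_irrefl a h⟩

lemma ApollonianNetwork.tri (A : ApollonianNetwork) (k : ℕ) (hk : 1 ≤ k) :
    ∀ v : A.Vert, A.gen v ≤ k → ∃ u x y,
      A.gen u = k ∧ A.gen x ≤ k ∧ A.gen y ≤ k ∧
      A.adj u x ∧ A.adj u y ∧ A.adj x y ∧ (v = u ∨ v = x ∨ v = y) := by
  induction k, hk using Nat.le_induction with
  | base =>
    intro v hv
    obtain ⟨a, b, c, hab, hac, hbc, hset⟩ := A.U1_card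
    have hga : A.gen a = 1 := by
      have : a ∈ ({a, b, c} : Set A.Vert) := by left; rfl
      rw [← hset] at this; exact this
    have hgb : A.gen b = 1 := by
      have : b ∈ ({a, b, c} : Set A.Vert) := by right; left; rfl
      rw [← hset] at this; exact this
    have hgc : A.gen c = 1 := by
      have : c ∈ ({a, b, c} : Set A.Vert) := by right; right; rfl
      rw [← hset] at this; exact this
    have hgv : A.gen v = 1 := le_antisymm hv (A.gen_pos v)
    have hvmem : v ∈ ({a, b, c} : Set A.Vert) := by rw [← hset]; exact hgv
    exact ⟨a, b, c, hga, hgb.le, hgc.le, A.U1_complete a b hga hgb hab,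
      A.U1_complete a c hga hgc hac, A.U1_complete b c hgb hgc hbc, hvmem⟩
  | succ k hk ih =>
    intro v hv
    rcases Nat.lt_or_ge (A.gen v) (k + 1) with hlt | hge
    · obtain ⟨u, x, y, hgu, hgx, hgy, hux, huy, hxy, hv3⟩ := ih v (Nat.lt_succ_iff.mp hlt)
      have hxyne : x ≠ y := fun h => A.adj_irrefl x (h ▸ hxy)
      obtain ⟨w, ⟨hgw, hNw⟩, -⟩ := A.attach k hk u x y hgu hgx hgy hxyne hux huy hxy
      have hwu : A.adj w u := by
        have : u ∈ ({u, x, y} : Set A.Vert) := by left; rfl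
        rw [← hNw] at this; exact this.1
      have hwx : A.adj w x := by
        have : x ∈ ({u, x, y} : Set A.Vert) := by right; left; rfl
        rw [← hNw] at this; exact this.1
      have hwy : A.adj w y := by
        have : y ∈ ({u, x, y} : Set A.Vert) := by right; right; rfl
        rw [← hNw] at this; exact this.1
      rcases hv3 with h | h | h
      · exact ⟨w, u, x, hgw, hgu.le.trans (Nat.le_succ k), hgx.trans (Nat.le_succ k),
          hwu, hwx, hux, Or.inr (Or.inl h)⟩
      · exact ⟨w, x, u, hgw, hgx.trans (Nat.le_succ k), hgu.le.trans (Nat.le_succ k),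
          hwx, hwu, A.adj_symm u x hux, Or.inr (Or.inl h)⟩
      · exact ⟨w, y, u, hgw, hgy.trans (Nat.le_succ k), hgu.le.trans (Nat.le_succ k),
          hwy, hwu, A.adj_symm u y huy, Or.inr (Or.inl h)⟩
    · have hgv : A.gen v = k + 1 := le_antisymm hv hge
      have h2 : 2 ≤ A.gen v := by omega
      obtain ⟨u, x, y, hgu, hgx, hgy, hux, huy, hxy, hNv⟩ := A.created v h2
      have hvu : A.adj v u := by
        have : u ∈ ({u, x, y} : Set A.Vert) := by left; rfl
        rw [← hNv] at this; exact this.1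
      have hvx : A.adj v x := by
        have : x ∈ ({u, x, y} : Set A.Vert) := by right; left; rfl
        rw [← hNv] at this; exact this.1
      exact ⟨v, u, x, hgv, by omega, by omega, hvu, hvx, hux, Or.inl rfl⟩

theorem stmt10 (A : ApollonianNetwork) (k : ℕ) (hk : 2 ≤ k) :
    ∀ v : A.Vert, A.gen v ≤ k - 1 → ∃ u : A.Vert, A.gen u = k ∧ A.adj v u := by
  intro v hv
  have hk1 : 1 ≤ k - 1 := by omega
  obtain ⟨u, x, y, hgu, hgx, hgy, hux, huy, hxy, hv3⟩ := A.tri (k - 1) hk1 v hv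
  have hxyne : x ≠ y := fun h => A.adj_irrefl x (h ▸ hxy)
  obtain ⟨w, ⟨hgw, hNw⟩, -⟩ := A.attach (k - 1) hk1 u x y hgu hgx hgy hxyne hux huy hxy
  have hgw' : A.gen w = k := by omega
  have hvmem : v ∈ ({u, x, y} : Set A.Vert) := hv3
  rw [← hNw] at hvmem
  exact ⟨w, hgw', A.adj_symm w v hvmem.1⟩
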